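/- arXiv:1401.6140 — 4 statements merged into one kernel-verified Lean document; each statement's English description precedes it below -/
import Mathlib

section
/- Let c(x) = (1+\sqrt{1-x^2}) e^{-\sqrt{1-x^2}}. Then c is strictly increasing on [0,1] and satisfies c(x) \geq x for all x in [0,1], with equality if and only if x = 1. -/
private lemma gAnti : StrictAntiOn (fun t : ℝ => (1 + t) * Real.exp (-t)) (Set.Ici 0) := by
  apply strictAntiOn_of_deriv_neg (convex_Ici 0)
  · exact Continuous.continuousOn (by continuity)
  · intro t ht
    rw [interior_Ici] at ht
    have h1 : HasDerivAt (fun t : ℝ => (1 + t) * Real.exp (-t))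
        (1 * Real.exp (-t) + (1 + t) * (Real.exp (-t) * -1)) t :=
      (((hasDerivAt_const t (1:ℝ)).add (hasDerivAt_id t)).congr_deriv (by ring)).mul
        (hasDerivAt_neg t).exp
  
    rw [h1.deriv]
    have := Real.exp_pos (-t)
    nlinarith [ht.out]

private lemma hMono : StrictMonoOn (fun t : ℝ => (1 + t) * Real.exp (-(2*t)) - (1 - t)) (Set.Ici 0) := by
  apply strictMonoOn_of_deriv_pos (convex_Ici 0)
  · exact Continuous.continuousOn (by continuity)
  · intro t ht
    rw [interior_Ici] at ht
    have e : HasDerivAt (fun t : ℝ => -(2*t)) (-2) t := by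
      exact (((hasDerivAt_id t).const_mul (2:ℝ)).neg).congr_deriv (by ring)
    have h1 : HasDerivAt (fun t : ℝ => (1 + t) * Real.exp (-(2*t)) - (1 - t))
        ((1 * Real.exp (-(2*t)) + (1 + t) * (Real.exp (-(2*t)) * -2)) - (0 - 1)) t :=
      ((((hasDerivAt_const t (1:ℝ)).add (hasDerivAt_id t)).congr_deriv (by ring)).mul
        e.exp).sub ((hasDerivAt_const t (1:ℝ)).sub (hasDerivAt_id t))
    rw [h1.deriv]
    have htp : (0:ℝ) < t := ht
    have h2 : 2*t + 1 < Real.exp (2*t) := Real.add_one_lt_exp ((by positivity : (0:ℝ) < 2*t).ne')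
    have h3 : Real.exp (-(2*t)) * Real.exp (2*t) = 1 := by
      rw [← Real.exp_add]; norm_num
    nlinarith [Real.exp_pos (-(2*t)), Real.exp_pos (2*t)]

theorem c_strictMono_and_ge :
    StrictMonoOn (fun x : ℝ => (1 + Real.sqrt (1 - x^2)) * Real.exp (-Real.sqrt (1 - x^2)))
      (Set.Icc 0 1) ∧
    ∀ x ∈ Set.Icc (0:ℝ) 1,
      x ≤ (1 + Real.sqrt (1 - x^2)) * Real.exp (-Real.sqrt (1 - x^2)) ∧
      ((1 + Real.sqrt (1 - x^2)) * Real.exp (-Real.sqrt (1 - x^2)) = x ↔ x = 1) := by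
  constructor
  · intro x hx y hy hxy
    have hx0 := hx.1
    have hy1 := hy.2
    have hst : Real.sqrt (1 - y^2) < Real.sqrt (1 - x^2) :=
      Real.sqrt_lt_sqrt (by nlinarith) (by nlinarith)
    exact gAnti (Set.mem_Ici.mpr (Real.sqrt_nonneg _)) (Set.mem_Ici.mpr (Real.sqrt_nonneg _)) hst
  · intro x hx
    set t := Real.sqrt (1 - x^2) with htdef
    have ht0 : 0 ≤ t := Real.sqrt_nonneg _
    have htsq : t^2 = 1 - x^2 := Real.sq_sqrt (by nlinarith [hx.1, hx.2])
    have h00 : (fun t : ℝ => (1 + t) * Real.exp (-(2*t)) - (1 - t)) 0 = 0 := by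
      norm_num
    have hes : Real.exp (-t) * Real.exp (-t) = Real.exp (-(2*t)) := by
      rw [← Real.exp_add]; ring_nf
    have hc0 : 0 < (1 + t) * Real.exp (-t) := by positivity
    have key : 1 - t ≤ (1 + t) * Real.exp (-(2*t)) := by
      rcases eq_or_lt_of_le ht0 with h | h
      · simp [← h]
      · have h1 := hMono (Set.self_mem_Ici) (Set.mem_Ici.mpr ht0) h
        rw [h00] at h1
        have h2 : 0 < (1 + t) * Real.exp (-(2*t)) - (1 - t) := h1
        linarith
    have hsq : x^2 ≤ ((1 + t) * Real.exp (-t))^2 := by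
      nlinarith [Real.exp_pos (-(2*t))]
    refine ⟨by nlinarith [hx.1], ?_, ?_⟩
    · intro heq
      by_contra hne
      have hx1 : x < 1 := lt_of_le_of_ne hx.2 hne
      have htpos : 0 < t := Real.sqrt_pos.mpr (by nlinarith [hx.1])
      have hstrict := hMono (Set.self_mem_Ici) (Set.mem_Ici.mpr ht0) htpos
      rw [h00] at hstrict
      have hstrict' : 0 < (1 + t) * Real.exp (-(2*t)) - (1 - t) := hstrict
      have keyS : 1 - t < (1 + t) * Real.exp (-(2*t)) := by linarith
      have hsqS : x^2 < ((1 + t) * Real.exp (-t))^2 := by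
        nlinarith [Real.exp_pos (-(2*t))]
      nlinarith [hx.1]
    · rintro rfl
      have ht : t = 0 := by rw [htdef]; norm_num
      rw [ht]; norm_num
end

section
/- Fix r in (0,1) and \gamma with \gamma^2 > c(r), where c(x) = (1+\sqrt{1-x^2})e^{-\sqrt{1-x^2}}. Define \phi : [0, 1/r] \to \mathbb{R} by \phi(x) = (c(rx)/\gamma^2 + x)/2. Then \phi maps [0,1/r] into itself, is a strict contraction (in fact 0 < \phi'(x) < 1), has a unique fixed point \ell in [0,1/r], and \ell < 1. -/
/-- The function `c(x) = (1+√(1-x²)) e^{-√(1-x²)}`. -/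
noncomputable def cfun (x : ℝ) : ℝ :=
  (1 + Real.sqrt (1 - x^2)) * Real.exp (-Real.sqrt (1 - x^2))

/-- The map `φ(x) = (c(rx)/γ² + x)/2`. -/
noncomputable def phifun (r γ x : ℝ) : ℝ := (cfun (r * x) / γ^2 + x) / 2

lemma cfun_pos (x : ℝ) : 0 < cfun x := by
  unfold cfun
  have := Real.sqrt_nonneg (1 - x^2)
  positivity

lemma cfun_le_one (x : ℝ) : cfun x ≤ 1 := by
  unfold cfun
  set s := Real.sqrt (1 - x^2) with hs
  have hs0 : 0 ≤ s := Real.sqrt_nonneg _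
  have h1 : s + 1 ≤ Real.exp s := Real.add_one_le_exp s
  have h3 : 0 < Real.exp s := Real.exp_pos s
  rw [Real.exp_neg, ← div_eq_mul_inv, div_le_one h3]
  linarith

lemma cfun_one : cfun 1 = 1 := by norm_num [cfun]

lemma hasDerivAt_cfun {x : ℝ} (hx : x ∈ Set.Ioo (0:ℝ) 1) :
    HasDerivAt cfun (x * Real.exp (-Real.sqrt (1 - x^2))) x := by
  obtain ⟨hx0, hx1⟩ := hx
  have h1 : (0:ℝ) < 1 - x^2 := by nlinarith
  set s := Real.sqrt (1 - x^2) with hs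
  have hs0 : 0 < s := Real.sqrt_pos.mpr h1
  have hds : HasDerivAt (fun y : ℝ => Real.sqrt (1 - y^2)) (-x / s) x := by
    have h2 : HasDerivAt (fun y : ℝ => 1 - y^2) (-(2*x)) x := by
      simpa using ((hasDerivAt_pow 2 x).const_sub 1)
    have h3 := (Real.hasDerivAt_sqrt (ne_of_gt h1)).comp x h2
    refine h3.congr_deriv ?_
    rw [← hs]
    field_simp
  have hde : HasDerivAt (fun y : ℝ => Real.exp (-Real.sqrt (1 - y^2)))
      (Real.exp (-s) * -(-x / s)) x := hds.neg.exp
  have hprod := (hds.const_add 1).mul hde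
  show HasDerivAt (fun y : ℝ => (1 + Real.sqrt (1 - y^2)) * Real.exp (-Real.sqrt (1 - y^2))) _ x
  refine hprod.congr_deriv ?_
  field_simp
  ring

lemma cfun_lip : AntitoneOn (fun x => cfun x - x) (Set.Icc (0:ℝ) 1) := by
  have hcont : ContinuousOn (fun x : ℝ => cfun x - x) (Set.Icc 0 1) := by
    unfold cfun; fun_prop
  apply antitoneOn_of_deriv_nonpos (convex_Icc 0 1) hcont
  · rw [interior_Icc]
    intro x hx
    exact ((hasDerivAt_cfun hx).sub (hasDerivAt_id x)).differentiableAt.differentiableWithinAt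
  · rw [interior_Icc]
    intro x hx
    have hd : HasDerivAt (fun x : ℝ => cfun x - x)
        (x * Real.exp (-Real.sqrt (1 - x^2)) - 1) x :=
      (hasDerivAt_cfun hx).sub (hasDerivAt_id x)
    rw [hd.deriv]
    have h1 : Real.exp (-Real.sqrt (1 - x^2)) ≤ 1 :=
      Real.exp_le_one_iff.mpr (neg_nonpos.mpr (Real.sqrt_nonneg _))
    nlinarith [hx.1, hx.2, Real.exp_pos (-Real.sqrt (1 - x^2))]

theorem phi_contraction_fixed_point (r γ : ℝ) (hr : r ∈ Set.Ioo (0:ℝ) 1)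
    (hγ : cfun r < γ^2) :
    Set.MapsTo (phifun r γ) (Set.Icc 0 (1/r)) (Set.Icc 0 (1/r)) ∧
    (∀ x ∈ Set.Ioo (0:ℝ) (1/r),
      HasDerivAt (phifun r γ)
        ((r * ((r*x) * Real.exp (-Real.sqrt (1 - (r*x)^2))) / γ^2 + 1) / 2) x ∧
      0 < (r * ((r*x) * Real.exp (-Real.sqrt (1 - (r*x)^2))) / γ^2 + 1) / 2 ∧
      (r * ((r*x) * Real.exp (-Real.sqrt (1 - (r*x)^2))) / γ^2 + 1) / 2 < 1) ∧
    (∃! ℓ : ℝ, ℓ ∈ Set.Icc (0:ℝ) (1/r) ∧ phifun r γ ℓ = ℓ) ∧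
    (∀ ℓ ∈ Set.Icc (0:ℝ) (1/r), phifun r γ ℓ = ℓ → ℓ < 1) := by
  obtain ⟨hr0, hr1⟩ := hr
  have hrinv : (0:ℝ) < 1/r := by positivity
  have hrr : r * (1/r) = 1 := by field_simp
  -- c(r) ≥ r
  have hcr : r ≤ cfun r := by
    have := cfun_lip (Set.mem_Icc.mpr ⟨hr0.le, hr1.le⟩) (Set.mem_Icc.mpr ⟨zero_le_one, le_refl 1⟩) hr1.le
    simp only [cfun_one] at this
    linarith
  have hγ0 : (0:ℝ) < γ^2 := lt_trans (cfun_pos r) hγ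
  have hrγ : r < γ^2 := lt_of_le_of_lt hcr hγ
  -- fixed point characterization
  have hfix : ∀ ℓ : ℝ, phifun r γ ℓ = ℓ → cfun (r * ℓ) = γ^2 * ℓ := by
    intro ℓ h
    unfold phifun at h
    field_simp at h
    have h' : cfun (r * ℓ) / γ^2 = ℓ := by linarith
    rw [div_eq_iff hγ0.ne'] at h'
    linarith
  -- MapsTo
  have hmaps : Set.MapsTo (phifun r γ) (Set.Icc 0 (1/r)) (Set.Icc 0 (1/r)) := by
    intro x hx
    obtain ⟨hx0, hx1⟩ := hx
    constructor
    · have := (cfun_pos (r*x)).le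
      unfold phifun; positivity
    · unfold phifun
      have h1 : cfun (r*x) ≤ 1 := cfun_le_one _
      have h2 : cfun (r*x) / γ^2 ≤ 1/r := by
        rw [div_le_div_iff₀ hγ0 hr0]
        nlinarith
      linarith
  refine ⟨hmaps, ?_, ?_, ?_⟩
  · -- derivative
    intro x hx
    obtain ⟨hx0, hx1⟩ := hx
    have hrx : r * x ∈ Set.Ioo (0:ℝ) 1 := by
      constructor
      · positivity
      · calc r * x < r * (1/r) := by apply mul_lt_mul_of_pos_left hx1 hr0
          _ = 1 := hrr
    have h1 : HasDerivAt (fun y : ℝ => cfun (r*y))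
        ((r*x) * Real.exp (-Real.sqrt (1 - (r*x)^2)) * r) x := by
      have hg : HasDerivAt (fun y : ℝ => r * y) r x := by
        simpa using (hasDerivAt_id x).const_mul r
      exact (hasDerivAt_cfun hrx).comp x hg
    have h2 : HasDerivAt (phifun r γ)
        ((r * ((r*x) * Real.exp (-Real.sqrt (1 - (r*x)^2))) / γ^2 + 1) / 2) x := by
      have h3 := ((h1.div_const (γ^2)).add (hasDerivAt_id x)).div_const 2
      refine h3.congr_deriv ?_
      ring
    refine ⟨h2, ?_, ?_⟩
    · have := Real.exp_pos (-Real.sqrt (1 - (r*x)^2))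
      have h4 : 0 ≤ r * ((r*x) * Real.exp (-Real.sqrt (1 - (r*x)^2))) / γ^2 := by positivity
      linarith
    · have he : Real.exp (-Real.sqrt (1 - (r*x)^2)) ≤ 1 :=
        Real.exp_le_one_iff.mpr (neg_nonpos.mpr (Real.sqrt_nonneg _))
      have he0 : 0 < Real.exp (-Real.sqrt (1 - (r*x)^2)) := Real.exp_pos _
      have h5 : r * ((r*x) * Real.exp (-Real.sqrt (1 - (r*x)^2))) / γ^2 < 1 := by
        rw [div_lt_one hγ0]
        nlinarith [hrx.1, hrx.2]
      linarith
  · -- unique fixed point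
    have hcont : ContinuousOn (fun x => phifun r γ x - x) (Set.Icc (0:ℝ) (1/r)) := by
      unfold phifun cfun; fun_prop
    have hg0 : 0 < phifun r γ 0 - 0 := by
      have h : 0 < cfun (r * 0) / γ^2 := div_pos (cfun_pos _) hγ0
      unfold phifun; linarith
    have hg1 : phifun r γ (1/r) - (1/r) < 0 := by
      unfold phifun
      rw [hrr, cfun_one]
      have : 1/γ^2 < 1/r := by
        rw [div_lt_div_iff₀ hγ0 hr0]; linarith
      linarith
    have := intermediate_value_Icc' hrinv.le hcont
    have h0mem : (0:ℝ) ∈ Set.Icc (phifun r γ (1/r) - 1/r) (phifun r γ 0 - 0) :=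
      Set.mem_Icc.mpr ⟨hg1.le, hg0.le⟩
    obtain ⟨ℓ, hℓmem, hℓ⟩ := this h0mem
    have hℓfix : phifun r γ ℓ = ℓ := by simpa [sub_eq_zero] using hℓ
    -- uniqueness helper
    have huniq : ∀ a b : ℝ, a ∈ Set.Icc (0:ℝ) (1/r) → b ∈ Set.Icc (0:ℝ) (1/r) →
        phifun r γ a = a → phifun r γ b = b → a ≤ b → b ≤ a := by
      intro a b ha hb hfa hfb hab
      have hma : r * a ∈ Set.Icc (0:ℝ) 1 := by
        constructor
        · exact mul_nonneg hr0.le ha.1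
        · calc r * a ≤ r * (1/r) := by apply mul_le_mul_of_nonneg_left ha.2 hr0.le
            _ = 1 := hrr
      have hmb : r * b ∈ Set.Icc (0:ℝ) 1 := by
        constructor
        · exact mul_nonneg hr0.le hb.1
        · calc r * b ≤ r * (1/r) := by apply mul_le_mul_of_nonneg_left hb.2 hr0.le
            _ = 1 := hrr
      have hlip := cfun_lip hma hmb (by nlinarith : r * a ≤ r * b)
      simp only at hlip
      have h1 := hfix a hfa
      have h2 := hfix b hfb
      nlinarith
    refine ⟨ℓ, ⟨hℓmem, hℓfix⟩, ?_⟩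
    intro y ⟨hymem, hyfix⟩
    rcases le_total y ℓ with h | h
    · exact le_antisymm h (huniq y ℓ hymem hℓmem hyfix hℓfix h)
    · exact le_antisymm (huniq ℓ y hℓmem hymem hℓfix hyfix h) h
  · -- ℓ < 1
    intro ℓ hℓmem hℓfix
    by_contra hge
    push_neg at hge
    have hm : r * ℓ ∈ Set.Icc (0:ℝ) 1 := by
      constructor
      · exact mul_nonneg hr0.le hℓmem.1
      · calc r * ℓ ≤ r * (1/r) := by apply mul_le_mul_of_nonneg_left hℓmem.2 hr0.le
          _ = 1 := hrr
    have hmr : r ∈ Set.Icc (0:ℝ) 1 := ⟨hr0.le, hr1.le⟩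
    have hlip := cfun_lip hmr hm (by nlinarith : r ≤ r * ℓ)
    simp only at hlip
    have h1 := hfix ℓ hℓfix
    nlinarith
end

section
/- Let \mathcal{G} = (X, E) be a graph on a compact homogeneous space X (acted on transitively by a compact group \Gamma of graph automorphisms, with induced probability measure), let V \subseteq X be a Borel set with a finite positive Borel measure \lambda, 0 < \lambda(V) < \infty, and let G be the subgraph induced on V. Then \alpha_X(\mathcal{G}) \leq \alpha_\lambda(G)/\lambda(V), where \alpha_X(\mathcal{G}) is the supremum of \mathrm{vol}_X(A) over measurable independent sets A of \mathcal{G}, and \alpha_\lambda(G) is the supremum of \lambda(B) over measurable independent sets B \subseteq V of G. -/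
open MeasureTheory

theorem independence_volume_le_subgraph_ratio (Γ X : Type*) [Group Γ]
    [TopologicalSpace Γ] [IsTopologicalGroup Γ] [CompactSpace Γ]
    [MeasurableSpace Γ] [BorelSpace Γ]
    [MeasurableSpace X] [MulAction Γ X] [MeasurableSMul Γ X] [MeasurableSMul₂ Γ X]
    [MulAction.IsPretransitive Γ X]
    (μ : Measure Γ) [IsProbabilityMeasure μ] [μ.IsMulLeftInvariant]
    [μ.IsMulRightInvariant]
    (p : X)
    (E : X → X → Prop) (hEsymm : ∀ x y, E x y → E y x)
    (hEinv : ∀ (γ : Γ) (x y : X), E x y → E (γ • x) (γ • y))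
    (V : Set X) (hV : MeasurableSet V)
    (lam : Measure X) [IsFiniteMeasure lam] (hlamV : lam Vᶜ = 0)
    (hlam0 : 0 < lam V) (hlamtop : lam V < ⊤) :
    (⨆ (A : Set X) (_ : MeasurableSet A ∧ ∀ x ∈ A, ∀ y ∈ A, ¬ E x y),
        (μ.map (fun γ : Γ => γ • p)) A) ≤
      (⨆ (B : Set X) (_ : B ⊆ V ∧ MeasurableSet B ∧ ∀ x ∈ B, ∀ y ∈ B, ¬ E x y),
        lam B) / lam V := by
  set α := (⨆ (B : Set X) (_ : B ⊆ V ∧ MeasurableSet B ∧ ∀ x ∈ B, ∀ y ∈ B, ¬ E x y),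
        lam B) with hα
  refine iSup₂_le fun A hA => ?_
  obtain ⟨hAm, hAind⟩ := hA
  rw [ENNReal.le_div_iff_mul_le (Or.inl hlam0.ne') (Or.inl hlamtop.ne)]
  have hmap : Measurable fun γ : Γ => γ • p := measurable_smul_const p
  have hVuniv : lam Set.univ = lam V := by
    have h := measure_add_measure_compl (μ := lam) hV
    rw [hlamV, add_zero] at h
    exact h.symm
  -- each slice is ≤ α
  have hslice : ∀ γ : Γ, lam {x | γ • x ∈ A} ≤ α := by
    intro γ
    have hm : MeasurableSet {x : X | γ • x ∈ A} := (measurable_const_smul γ) hAm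
    have hdiff : lam ({x | γ • x ∈ A} \ V) = 0 :=
      measure_mono_null (fun x hx => hx.2) hlamV
    have h1 : lam {x | γ • x ∈ A} = lam ({x | γ • x ∈ A} ∩ V) := by
      have := measure_inter_add_diff (μ := lam) {x | γ • x ∈ A} hV
      rw [hdiff, add_zero] at this
      exact this.symm
    rw [h1]
    refine le_trans (le_of_eq rfl) (le_iSup₂ (f := fun B _ => lam B)
      ({x | γ • x ∈ A} ∩ V) ⟨fun x hx => hx.2, hm.inter hV, ?_⟩)
    intro x hx y hy hxy
    exact hAind _ hx.1 _ hy.1 (hEinv γ x y hxy)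
  -- constant value of the fiber measure
  have key1 : ∀ x : X, μ {γ | γ • x ∈ A} = (μ.map (fun γ : Γ => γ • p)) A := by
    intro x
    obtain ⟨g, hg⟩ := MulAction.exists_smul_eq Γ p x
    have hset : {γ : Γ | γ • x ∈ A} = (fun γ => γ * g) ⁻¹' {γ | γ • p ∈ A} := by
      ext γ; simp [Set.mem_preimage, ← hg, mul_smul]
    rw [Measure.map_apply hmap hAm, hset, measure_preimage_mul_right]
    rfl
  -- main computation via Fubini
  have hmeas2 : Measurable fun q : X × Γ => A.indicator (1 : X → ENNReal) (q.2 • q.1) := by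
    have h1 : Measurable fun q : X × Γ => q.2 • q.1 :=
      (measurable_smul (M := Γ) (α := X)).comp measurable_swap
    exact (measurable_const.indicator hAm).comp h1
  have calc1 : (μ.map (fun γ : Γ => γ • p)) A * lam V
      = ∫⁻ x, μ {γ | γ • x ∈ A} ∂lam := by
    rw [← hVuniv]
    simp only [key1]
    rw [lintegral_const, mul_comm]
  have calc2 : ∫⁻ x, μ {γ | γ • x ∈ A} ∂lam
      = ∫⁻ γ, lam {x | γ • x ∈ A} ∂μ := by
    have e1 : ∀ x : X, μ {γ | γ • x ∈ A} = ∫⁻ γ, A.indicator 1 (γ • x) ∂μ := by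
      intro x
      have h : ∀ γ : Γ, A.indicator (1 : X → ENNReal) (γ • x)
          = ((fun γ : Γ => γ • x) ⁻¹' A).indicator 1 γ := by
        intro γ; by_cases hγ : γ • x ∈ A <;>
          simp [Set.indicator_apply, hγ, Set.mem_preimage]
      simp only [h]
      rw [lintegral_indicator_one ((measurable_smul_const x) hAm)]
      rfl
    have e2 : ∀ γ : Γ, lam {x | γ • x ∈ A} = ∫⁻ x, A.indicator 1 (γ • x) ∂lam := by
      intro γ
      have h : ∀ x : X, A.indicator (1 : X → ENNReal) (γ • x)
          = ((fun x : X => γ • x) ⁻¹' A).indicator 1 x := by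
        intro x; by_cases hx : γ • x ∈ A <;>
          simp [Set.indicator_apply, hx, Set.mem_preimage]
      simp only [h]
      rw [lintegral_indicator_one ((measurable_const_smul γ) hAm)]
      rfl
    simp only [e1, e2]
    exact lintegral_lintegral_swap hmeas2.aemeasurable
  rw [calc1, calc2]
  calc ∫⁻ γ, lam {x | γ • x ∈ A} ∂μ ≤ ∫⁻ _, α ∂μ := lintegral_mono hslice
    _ = α := by simp
end

section
/- For finite vertex-transitive graphs, the subgraph density inequality holds: if \mathcal{G} = (X, E) is a finite graph whose automorphism group acts transitively on X, and G is the subgraph induced on a subset V \subseteq X, then \alpha(\mathcal{G})/|X| \leq \alpha(G)/|V|. -/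
open scoped Classical

theorem vertex_transitive_subgraph_ratio (X : Type*) [Fintype X] (G : SimpleGraph X)
    (htrans : ∀ x y : X, ∃ e : SimpleGraph.Iso G G, e x = y)
    (V : Finset X) (hV : V.Nonempty) :
    (((Finset.univ.powerset.filter
        (fun A : Finset X => ∀ x ∈ A, ∀ y ∈ A, ¬ G.Adj x y)).sup Finset.card : ℕ) : ℝ)
      / Fintype.card X ≤
    (((V.powerset.filter
        (fun A : Finset X => ∀ x ∈ A, ∀ y ∈ A, ¬ G.Adj x y)).sup Finset.card : ℕ) : ℝ)
      / V.card := by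
  classical
  obtain ⟨v₀, hv₀⟩ := hV
  haveI : Nonempty X := ⟨v₀⟩
  haveI : Fintype (G ≃g G) := Fintype.ofInjective (fun e => (e : X ≃ X))
    (fun a b h => by cases a; cases b; simp only [RelIso.mk.injEq]; exact h)
  set a : ℕ := (Finset.univ.powerset.filter
        (fun A : Finset X => ∀ x ∈ A, ∀ y ∈ A, ¬ G.Adj x y)).sup Finset.card with ha
  set b : ℕ := (V.powerset.filter
        (fun A : Finset X => ∀ x ∈ A, ∀ y ∈ A, ¬ G.Adj x y)).sup Finset.card with hb
  -- extract a maximum independent set A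
  obtain ⟨A, hAmem, hAcard⟩ := Finset.exists_mem_eq_sup
    (Finset.univ.powerset.filter
        (fun A : Finset X => ∀ x ∈ A, ∀ y ∈ A, ¬ G.Adj x y))
    ⟨∅, by simp⟩ Finset.card
  have hAind : ∀ x ∈ A, ∀ y ∈ A, ¬ G.Adj x y := (Finset.mem_filter.mp hAmem).2
  -- fiber count
  set c : ℕ := (Finset.univ.filter (fun γ : G ≃g G => γ v₀ = v₀)).card with hc
  have fiber_card : ∀ x v : X,
      (Finset.univ.filter (fun γ : G ≃g G => γ x = v)).card = c := by
    intro x v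
    obtain ⟨f, hf⟩ := htrans v₀ x
    obtain ⟨g, hg⟩ := htrans v v₀
    rw [hc]
    refine Finset.card_nbij' (fun γ => f.trans (γ.trans g))
      (fun δ => f.symm.trans (δ.trans g.symm)) ?_ ?_ ?_ ?_
    · intro γ hγ
      simp only [Finset.mem_coe, Finset.mem_filter, Finset.mem_univ, true_and] at hγ ⊢
      simp [RelIso.trans_apply, hf, hγ, hg]
    · intro δ hδ
      simp only [Finset.mem_coe, Finset.mem_filter, Finset.mem_univ, true_and] at hδ ⊢
      have : f v₀ = x := hf
      simp only [RelIso.trans_apply]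
      rw [← hf, f.symm_apply_apply]
      rw [← hg] at hδ ⊢
      have := g.injective
      apply g.injective
      rw [g.apply_symm_apply, hδ]
    · intro γ hγ
      apply RelIso.ext
      intro z
      simp [RelIso.trans_apply]
    · intro δ hδ
      apply RelIso.ext
      intro z
      simp [RelIso.trans_apply]
  have hcpos : 0 < c := by
    rw [hc]
    refine Finset.card_pos.mpr ⟨RelIso.refl G.Adj, ?_⟩
    simp
  -- total number of automorphisms
  have htotal : Fintype.card (G ≃g G) = Fintype.card X * c := by
    have := Finset.card_eq_sum_card_fiberwise
      (f := fun γ : G ≃g G => γ v₀) (s := Finset.univ) (t := Finset.univ)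
      (fun γ _ => Finset.mem_univ _)
    rw [Finset.card_univ] at this
    rw [this]
    rw [Finset.sum_congr rfl (fun v _ => fiber_card v₀ v)]
    simp [Finset.card_univ, mul_comm]
  -- for each x, count automorphisms sending x into V
  have hrow : ∀ x : X,
      (Finset.univ.filter (fun γ : G ≃g G => γ x ∈ V)).card = V.card * c := by
    intro x
    have := Finset.card_eq_sum_card_fiberwise
      (f := fun γ : G ≃g G => γ x)
      (s := Finset.univ.filter (fun γ : G ≃g G => γ x ∈ V)) (t := V)
      (fun γ hγ => (Finset.mem_filter.mp hγ).2)
    rw [this]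
    have : ∀ v ∈ V,
        ((Finset.univ.filter (fun γ : G ≃g G => γ x ∈ V)).filter
          (fun γ => γ x = v)).card = c := by
      intro v hv
      rw [Finset.filter_filter]
      rw [← fiber_card x v]
      congr 1
      apply Finset.filter_congr
      intro γ _
      constructor
      · exact fun h => h.2
      · intro h; exact ⟨h ▸ hv, h⟩
    rw [Finset.sum_congr rfl this]
    simp [Finset.sum_const, mul_comm]
  -- the double-counted sum
  have key : A.card * (V.card * c) =
      ∑ γ : G ≃g G, (A.filter (fun x => γ x ∈ V)).card := by
    have : ∀ γ : G ≃g G, (A.filter (fun x => γ x ∈ V)).card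
        = ∑ x ∈ A, if γ x ∈ V then 1 else 0 := by
      intro γ
      rw [Finset.card_filter]
    rw [Finset.sum_congr rfl (fun γ _ => this γ)]
    rw [Finset.sum_comm]
    have : ∀ x ∈ A, (∑ γ : G ≃g G, if γ x ∈ V then 1 else 0)
        = V.card * c := by
      intro x _
      rw [← hrow x, Finset.card_filter]
    rw [Finset.sum_congr rfl this]
    simp [Finset.sum_const, Finset.card_univ, mul_comm]
  -- each term is at most b
  have hterm : ∀ γ : G ≃g G, (A.filter (fun x => γ x ∈ V)).card ≤ b := by
    intro γ
    set B := (A.filter (fun x => γ x ∈ V)).image γ with hB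
    have hcardB : B.card = (A.filter (fun x => γ x ∈ V)).card := by
      rw [hB]
      exact Finset.card_image_of_injective _ γ.injective
    rw [← hcardB, hb]
    apply Finset.le_sup
    rw [Finset.mem_filter, Finset.mem_powerset]
    constructor
    · intro y hy
      rw [hB, Finset.mem_image] at hy
      obtain ⟨x, hx, rfl⟩ := hy
      exact (Finset.mem_filter.mp hx).2
    · intro x hx y hy
      rw [hB, Finset.mem_image] at hx hy
      obtain ⟨x', hx', rfl⟩ := hx
      obtain ⟨y', hy', rfl⟩ := hy
      rw [γ.map_rel_iff]
      exact hAind x' (Finset.mem_filter.mp hx').1 y' (Finset.mem_filter.mp hy').1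
  -- combine
  have hmain : A.card * V.card ≤ Fintype.card X * b := by
    have h1 : A.card * (V.card * c) ≤ Fintype.card X * c * b := by
      rw [key, ← htotal]
      calc ∑ γ : G ≃g G, (A.filter (fun x => γ x ∈ V)).card
          ≤ ∑ _γ : G ≃g G, b := Finset.sum_le_sum (fun γ _ => hterm γ)
        _ = Fintype.card (G ≃g G) * b := by simp [Finset.sum_const, Finset.card_univ]
    have h2 : A.card * V.card * c ≤ Fintype.card X * b * c := by
      calc A.card * V.card * c = A.card * (V.card * c) := by ring
        _ ≤ Fintype.card X * c * b := h1
        _ = Fintype.card X * b * c := by ring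
    exact Nat.le_of_mul_le_mul_right h2 hcpos
  -- finish with real arithmetic
  have hXpos : (0:ℝ) < Fintype.card X := by
    exact_mod_cast Fintype.card_pos
  have hVpos : (0:ℝ) < V.card := by
    exact_mod_cast Finset.card_pos.mpr ⟨v₀, hv₀⟩
  rw [div_le_div_iff₀ hXpos hVpos]
  have : (a:ℝ) * V.card ≤ b * Fintype.card X := by
    rw [ha, hAcard]
    exact_mod_cast hmain.trans_eq (mul_comm _ _)
  exact this
end
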